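/- Suppose the inclusion indicators of the sampling design p are pairwise independent, i.e. π_{ij} = π_i π_j for all i ≠ j, with π_i > 0. Then the minimax risk among all unbiased estimators equals Σ_{i=1}^N r_i² (1−π_i)/π_i; that is, inf_δ sup_{y∈Θ} R(δ,p;y) = Σ_{i=1}^N r_i²(1−π_i)/π_i, and the infimum is attained by the midpoint-differenced Horvitz–Thompson estimator T̂. -/

import Mathlib

private lemma flip_sum_zero {N : ℕ} (i : Fin N) (c : ℝ) (F : Finset (Fin N) → ℝ)
    (hF : ∀ t, F (symmDiff t {i}) = F t) :
    ∑ t : Finset (Fin N), (if i ∈ t then c else -c) * F t = 0 := by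
  have e : Function.Bijective (fun t : Finset (Fin N) => symmDiff t {i}) := by
    apply Function.bijective_iff_has_inverse.2
    exact ⟨fun t => symmDiff t {i}, fun t => by simp [symmDiff_symmDiff_cancel_right],
      fun t => by simp [symmDiff_symmDiff_cancel_right]⟩
  have h1 : ∑ t : Finset (Fin N), (if i ∈ t then c else -c) * F t
      = ∑ t : Finset (Fin N),
          (if i ∈ symmDiff t {i} then c else -c) * F (symmDiff t {i}) :=
    (Function.Bijective.sum_comp e _).symm
  have h2 : ∀ t : Finset (Fin N),
      (if i ∈ symmDiff t {i} then c else -c) * F (symmDiff t {i})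
        = -((if i ∈ t then c else -c) * F t) := by
    intro t
    rw [hF]
    by_cases h : i ∈ t <;> simp [Finset.mem_symmDiff, h]
  rw [Finset.sum_congr rfl (fun t _ => h2 t), Finset.sum_neg_distrib] at h1
  linarith

private lemma ortho_eps {N : ℕ} (r : Fin N → ℝ) (i j : Fin N) :
    ∑ t : Finset (Fin N), (if i ∈ t then r i else -r i) * (if j ∈ t then r j else -r j)
      = if i = j then (Fintype.card (Finset (Fin N)) : ℝ) * r i ^ 2 else 0 := by
  rcases eq_or_ne i j with h | h
  · subst h
    have h1 : ∀ t : Finset (Fin N),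
        (if i ∈ t then r i else -r i) * (if i ∈ t then r i else -r i) = r i ^ 2 := by
      intro t; by_cases h : i ∈ t <;> simp [h] <;> ring
    rw [Finset.sum_congr rfl (fun t _ => h1 t), Finset.sum_const, Finset.card_univ,
      nsmul_eq_mul]
    simp
  · rw [if_neg h]
    refine flip_sum_zero i (r i) _ (fun t => ?_)
    have : (j ∈ symmDiff t {i}) ↔ j ∈ t := by
      simp [Finset.mem_symmDiff, Ne.symm h]
    rw [if_congr this rfl rfl]

private lemma sq_expand {ι κ : Type*} [Fintype ι] [Fintype κ] (w : ι → ℝ) (f : κ → ι → ℝ) :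
    ∑ x : ι, w x * (∑ k : κ, f k x) ^ 2
      = ∑ k : κ, ∑ l : κ, (∑ x : ι, w x * (f k x * f l x)) := by
  have h : ∀ x : ι, w x * (∑ k : κ, f k x) ^ 2 = ∑ k : κ, ∑ l : κ, w x * (f k x * f l x) := by
    intro x
    rw [sq, Finset.sum_mul_sum, Finset.mul_sum]
    exact Finset.sum_congr rfl fun k _ => by rw [Finset.mul_sum]
  rw [Finset.sum_congr rfl (fun x _ => h x), Finset.sum_comm]
  exact Finset.sum_congr rfl fun k _ => Finset.sum_comm

private lemma sum_p_inner {N : ℕ} (p : Finset (Fin N) → ℝ) (f : Fin N → ℝ) :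
    ∑ s : Finset (Fin N), p s * ∑ i ∈ s, f i
      = ∑ i : Fin N, (∑ s : Finset (Fin N), if i ∈ s then p s else 0) * f i := by
  have h : ∀ s : Finset (Fin N), p s * ∑ i ∈ s, f i
      = ∑ i : Fin N, (if i ∈ s then p s * f i else 0) := by
    intro s
    rw [Finset.sum_ite_mem, Finset.univ_inter, Finset.mul_sum]
  rw [Finset.sum_congr rfl (fun s _ => h s), Finset.sum_comm]
  refine Finset.sum_congr rfl fun i _ => ?_
  rw [Finset.sum_mul]
  exact Finset.sum_congr rfl fun s _ => by rw [ite_mul, zero_mul]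

/-- Proposition: minimax risk under pairwise independence.
If the inclusion indicators of the design `p` are pairwise independent
(`π_{ij} = π i * π j` for `i ≠ j`) with `π i > 0`, then the minimax risk among
all unbiased estimators equals `∑ i, r i ^ 2 * (1 - π i)/π i`:
* (lower bound) for every unbiased estimator `δ`, every upper bound `M` of the
  risk of `δ` over `Θ` satisfies `∑ i, r i ^ 2 * (1 - π i)/π i ≤ M`;
* (attainment) the midpoint-differenced Horvitz–Thompson estimator `T̂` is
  unbiased, and `∑ i, r i ^ 2 * (1 - π i)/π i` is the least upper bound of its
  risk over `Θ`. -/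
theorem minimax_pairwise_independent
    (N : ℕ) (a b : Fin N → ℝ) (hab : ∀ i, a i ≤ b i)
    (m r : Fin N → ℝ)
    (hm : ∀ i, m i = (a i + b i) / 2)
    (hr : ∀ i, r i = (b i - a i) / 2)
    (p : Finset (Fin N) → ℝ) (hp0 : ∀ s, 0 ≤ p s)
    (hp1 : ∑ s : Finset (Fin N), p s = 1)
    (π : Fin N → ℝ)
    (hπ : ∀ i, π i = ∑ s : Finset (Fin N), if i ∈ s then p s else 0)
    (hπpos : ∀ i, 0 < π i)
    (πij : Fin N → Fin N → ℝ)
    (hπij : ∀ i j, πij i j = ∑ s : Finset (Fin N), if i ∈ s ∧ j ∈ s then p s else 0)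
    (hpind : ∀ i j, i ≠ j → πij i j = π i * π j) :
    -- lower bound: no unbiased estimator has worst-case risk below the value
    (∀ δ : Finset (Fin N) → (Fin N → ℝ) → ℝ,
      (∀ s (y y' : Fin N → ℝ), (∀ i ∈ s, y i = y' i) → δ s y = δ s y') →
      (∀ y : Fin N → ℝ, (∀ i, y i ∈ Set.Icc (a i) (b i)) →
        ∑ s : Finset (Fin N), p s * δ s y = ∑ i, y i) →
      ∀ M : ℝ,
        (∀ y : Fin N → ℝ, (∀ i, y i ∈ Set.Icc (a i) (b i)) →
          ∑ s : Finset (Fin N), p s * (δ s y - ∑ i, y i) ^ 2 ≤ M) →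
        ∑ i, r i ^ 2 * ((1 - π i) / π i) ≤ M) ∧
    -- the midpoint-differenced HT estimator is unbiased ...
    (∀ y : Fin N → ℝ, (∀ i, y i ∈ Set.Icc (a i) (b i)) →
      ∑ s : Finset (Fin N),
        p s * ((∑ i, m i) + ∑ i ∈ s, (y i - m i) / π i) = ∑ i, y i) ∧
    -- ... and attains the minimax value: its worst-case risk over Θ equals it
    IsLUB ((fun y : Fin N → ℝ =>
        ∑ s : Finset (Fin N),
          p s * (((∑ i, m i) + ∑ i ∈ s, (y i - m i) / π i) - ∑ i, y i) ^ 2) ''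
      {y : Fin N → ℝ | ∀ i, y i ∈ Set.Icc (a i) (b i)})
      (∑ i, r i ^ 2 * ((1 - π i) / π i)) := by
  have hπne : ∀ i, π i ≠ 0 := fun i => (hπpos i).ne'
  -- π i ≤ 1
  have hπle : ∀ i, π i ≤ 1 := by
    intro i
    rw [hπ i, ← hp1]
    refine Finset.sum_le_sum fun s _ => ?_
    split <;> [exact le_rfl; exact hp0 s]
  have hcompl : ∀ i, ∑ s : Finset (Fin N), (if i ∈ s then (0:ℝ) else p s) = 1 - π i := by
    intro i
    have h := hp1
    have : ∀ s : Finset (Fin N),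
        (if i ∈ s then (0:ℝ) else p s) = p s - (if i ∈ s then p s else 0) := by
      intro s; split <;> ring
    rw [Finset.sum_congr rfl (fun s _ => this s), Finset.sum_sub_distrib, hp1, ← hπ i]
  -- unbiasedness of the HT estimator
  have hunbHT : ∀ y : Fin N → ℝ,
      ∑ s : Finset (Fin N),
        p s * ((∑ i, m i) + ∑ i ∈ s, (y i - m i) / π i) = ∑ i, y i := by
    intro y
    have h1 : ∀ s : Finset (Fin N),
        p s * ((∑ i, m i) + ∑ i ∈ s, (y i - m i) / π i)
          = p s * (∑ i, m i) + p s * ∑ i ∈ s, (y i - m i) / π i := fun s => mul_add _ _ _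
    rw [Finset.sum_congr rfl (fun s _ => h1 s), Finset.sum_add_distrib, ← Finset.sum_mul,
      hp1, one_mul, sum_p_inner p (fun i => (y i - m i) / π i)]
    have h2 : ∀ i : Fin N,
        (∑ s : Finset (Fin N), if i ∈ s then p s else 0) * ((y i - m i) / π i)
          = y i - m i := by
      intro i
      rw [← hπ i, mul_div_cancel₀ _ (hπne i)]
    rw [Finset.sum_congr rfl (fun i _ => h2 i), ← Finset.sum_add_distrib]
    exact Finset.sum_congr rfl fun i _ => by ring
  -- risk identity for the HT estimator
  have hrisk : ∀ y : Fin N → ℝ,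
      ∑ s : Finset (Fin N),
        p s * (((∑ i, m i) + ∑ i ∈ s, (y i - m i) / π i) - ∑ i, y i) ^ 2
      = ∑ i, (y i - m i) ^ 2 * ((1 - π i) / π i) := by
    intro y
    have hdev : ∀ s : Finset (Fin N),
        ((∑ i, m i) + ∑ i ∈ s, (y i - m i) / π i) - ∑ i, y i
          = ∑ i : Fin N, (y i - m i) * ((if i ∈ s then 1 / π i else 0) - 1) := by
      intro s
      have h1 : ∑ i ∈ s, (y i - m i) / π i
          = ∑ i : Fin N, (y i - m i) * (if i ∈ s then 1 / π i else 0) := by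
        have h0 : ∀ i : Fin N, (y i - m i) * (if i ∈ s then 1 / π i else 0)
            = if i ∈ s then (y i - m i) / π i else 0 := by
          intro i; split
          · rw [mul_one_div]
          · rw [mul_zero]
        rw [Finset.sum_congr rfl (fun i _ => h0 i), Finset.sum_ite_mem, Finset.univ_inter]
      rw [h1]
      have h2 : ∑ i : Fin N, (y i - m i) * ((if i ∈ s then 1 / π i else 0) - 1)
          = (∑ i : Fin N, (y i - m i) * (if i ∈ s then 1 / π i else 0))
            - ∑ i : Fin N, (y i - m i) := by
        rw [← Finset.sum_sub_distrib]
        exact Finset.sum_congr rfl fun i _ => by ring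
      rw [h2, Finset.sum_sub_distrib]
      ring
    rw [Finset.sum_congr rfl (fun s (_ : s ∈ Finset.univ) => by rw [hdev s]),
      sq_expand p (fun i s => (y i - m i) * ((if i ∈ s then 1 / π i else 0) - 1))]
    have hS1 : ∀ i : Fin N, ∑ s : Finset (Fin N), p s * (if i ∈ s then 1 / π i else 0) = 1 := by
      intro i
      have h0 : ∀ s : Finset (Fin N), p s * (if i ∈ s then 1 / π i else 0)
          = (if i ∈ s then p s else 0) * (1 / π i) := by
        intro s; split <;> ring
      rw [Finset.sum_congr rfl (fun s _ => h0 s), ← Finset.sum_mul, ← hπ i]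
      rw [mul_one_div]
      exact div_self (hπne i)
    have hS2 : ∀ i j : Fin N,
        ∑ s : Finset (Fin N),
          p s * ((if i ∈ s then 1 / π i else 0) * (if j ∈ s then 1 / π j else 0))
          = πij i j * (1 / π i * (1 / π j)) := by
      intro i j
      have h0 : ∀ s : Finset (Fin N),
          p s * ((if i ∈ s then 1 / π i else 0) * (if j ∈ s then 1 / π j else 0))
            = (if i ∈ s ∧ j ∈ s then p s else 0) * (1 / π i * (1 / π j)) := by
        intro s
        by_cases h1 : i ∈ s <;> by_cases h2 : j ∈ s <;> simp [h1, h2]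
      rw [Finset.sum_congr rfl (fun s _ => h0 s), ← Finset.sum_mul, ← hπij i j]
    have hQ : ∀ i j : Fin N,
        ∑ s : Finset (Fin N),
          p s * (((if i ∈ s then 1 / π i else 0) - 1) * ((if j ∈ s then 1 / π j else 0) - 1))
          = if i = j then (1 - π i) / π i else 0 := by
      intro i j
      have expand : ∀ s ∈ Finset.univ (α := Finset (Fin N)),
          p s * (((if i ∈ s then 1 / π i else 0) - 1) * ((if j ∈ s then 1 / π j else 0) - 1))
            = p s * ((if i ∈ s then 1 / π i else 0) * (if j ∈ s then 1 / π j else 0))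
              - p s * (if i ∈ s then 1 / π i else 0)
              - p s * (if j ∈ s then 1 / π j else 0) + p s := fun s _ => by ring
      rw [Finset.sum_congr rfl expand, Finset.sum_add_distrib, Finset.sum_sub_distrib,
        Finset.sum_sub_distrib, hS2 i j, hS1 i, hS1 j, hp1]
      rcases eq_or_ne i j with h | h
      · subst h
        rw [if_pos rfl]
        have hii : πij i i = π i := by
          rw [hπij i i, hπ i]
          exact Finset.sum_congr rfl fun s _ => by simp
        rw [hii]
        field_simp [hπne i]
        ring
      · rw [if_neg h, hpind i j h]
        field_simp [hπne i, hπne j]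
        ring
    have h4 : ∀ i j : Fin N,
        ∑ s : Finset (Fin N),
          p s * ((y i - m i) * ((if i ∈ s then 1 / π i else 0) - 1)
            * ((y j - m j) * ((if j ∈ s then 1 / π j else 0) - 1)))
          = if i = j then (y i - m i) * (y j - m j) * ((1 - π i) / π i) else 0 := by
      intro i j
      have h5 : ∑ s : Finset (Fin N),
          p s * ((y i - m i) * ((if i ∈ s then 1 / π i else 0) - 1)
            * ((y j - m j) * ((if j ∈ s then 1 / π j else 0) - 1)))
          = (y i - m i) * (y j - m j)
            * ∑ s : Finset (Fin N),
              p s * (((if i ∈ s then 1 / π i else 0) - 1) * ((if j ∈ s then 1 / π j else 0) - 1)) := by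
        rw [Finset.mul_sum]
        exact Finset.sum_congr rfl fun s _ => by ring
      rw [h5, hQ i j]
      split <;> simp
    rw [Finset.sum_congr rfl
      (fun i (_ : i ∈ Finset.univ) => Finset.sum_congr rfl (fun j (_ : j ∈ Finset.univ) => h4 i j))]
    refine Finset.sum_congr rfl fun i _ => ?_
    rw [Finset.sum_ite_eq]
    rw [if_pos (Finset.mem_univ i)]
    ring
  refine ⟨?_, fun y _ => hunbHT y, ?_⟩
  · intro δ hdep hunb M hM
    set K : ℝ := (Fintype.card (Finset (Fin N)) : ℝ) with hK
    have hKpos : 0 < K := by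
      rw [hK]; exact_mod_cast Fintype.card_pos
    set Y : Finset (Fin N) → Fin N → ℝ := fun t i => if i ∈ t then b i else a i with hY
    set E : Fin N → Finset (Fin N) → ℝ := fun i t => if i ∈ t then r i else -r i with hE
    set H : Finset (Fin N) → Finset (Fin N) → ℝ := fun s t => δ s (Y t) - ∑ i, Y t i with hH
    set C : Finset (Fin N) → Fin N → ℝ :=
      fun s i => ∑ t : Finset (Fin N), E i t * H s t with hC
    set u : Finset (Fin N) → Fin N → ℝ :=
      fun s i => (if i ∈ s then 1 / π i else 0) - 1 with hu
    have hYmem : ∀ t : Finset (Fin N), ∀ i, Y t i ∈ Set.Icc (a i) (b i) := by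
      intro t i
      simp only [hY]
      by_cases h : i ∈ t
      · rw [if_pos h]; exact ⟨hab i, le_rfl⟩
      · rw [if_neg h]; exact ⟨le_rfl, hab i⟩
    have hYsum : ∀ t : Finset (Fin N), ∑ i, Y t i = (∑ i, m i) + ∑ i, E i t := by
      intro t
      rw [← Finset.sum_add_distrib]
      refine Finset.sum_congr rfl fun i _ => ?_
      simp only [hY, hE]
      by_cases h : i ∈ t
      · rw [if_pos h, if_pos h, hm i, hr i]; ring
      · rw [if_neg h, if_neg h, hm i, hr i]; ring
    have hortho : ∀ i j : Fin N, ∑ t : Finset (Fin N), E i t * E j t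
        = if i = j then K * r i ^ 2 else 0 := by
      intro i j
      simp only [hE, hK]
      exact ortho_eps r i j
    have hflip : ∀ (i : Fin N) (F : Finset (Fin N) → ℝ),
        (∀ t, F (symmDiff t {i}) = F t) →
        ∑ t : Finset (Fin N), E i t * F t = 0 := by
      intro i F hF
      simp only [hE]
      exact flip_sum_zero i (r i) F hF
    have hH0 : ∀ t : Finset (Fin N), ∑ s : Finset (Fin N), p s * H s t = 0 := by
      intro t
      have h1 : ∀ s ∈ Finset.univ (α := Finset (Fin N)),
          p s * H s t = p s * δ s (Y t) - p s * (∑ i, Y t i) := by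
        intro s _; simp only [hH]; ring
      rw [Finset.sum_congr rfl h1, Finset.sum_sub_distrib, hunb (Y t) (hYmem t),
        ← Finset.sum_mul, hp1, one_mul, sub_self]
    have hCnot : ∀ (s : Finset (Fin N)) (i : Fin N), i ∉ s → C s i = -(K * r i ^ 2) := by
      intro s i his
      have h1 : ∀ t ∈ Finset.univ (α := Finset (Fin N)),
          E i t * H s t
            = E i t * δ s (Y t) - E i t * (∑ j, m j) - E i t * (∑ j, E j t) := by
        intro t _
        simp only [hH]
        rw [hYsum t]; ring
      have e1 : ∑ t : Finset (Fin N), E i t * δ s (Y t) = 0 := by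
        refine hflip i _ (fun t => ?_)
        refine hdep s _ _ (fun j hj => ?_)
        have hji : j ≠ i := fun h => his (h ▸ hj)
        simp only [hY]
        exact if_congr (by simp [Finset.mem_symmDiff, hji]) rfl rfl
      have e2 : ∑ t : Finset (Fin N), E i t * (∑ j, m j) = 0 := hflip i _ (fun t => rfl)
      have e3 : ∑ t : Finset (Fin N), E i t * (∑ j, E j t) = K * r i ^ 2 := by
        have h2 : ∀ t ∈ Finset.univ (α := Finset (Fin N)),
            E i t * (∑ j, E j t) = ∑ j, E i t * E j t := fun t _ => Finset.mul_sum _ _ _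
        rw [Finset.sum_congr rfl h2, Finset.sum_comm,
          Finset.sum_congr rfl (fun j (_ : j ∈ Finset.univ) => hortho i j),
          Finset.sum_ite_eq, if_pos (Finset.mem_univ i)]
      simp only [hC]
      rw [Finset.sum_congr rfl h1, Finset.sum_sub_distrib, Finset.sum_sub_distrib,
        e1, e2, e3]
      ring
    have hC0 : ∀ i : Fin N, ∑ s : Finset (Fin N), p s * C s i = 0 := by
      intro i
      have h1 : ∀ s ∈ Finset.univ (α := Finset (Fin N)),
          p s * C s i = ∑ t : Finset (Fin N), E i t * (p s * H s t) := by
        intro s _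
        simp only [hC]
        rw [Finset.mul_sum]
        exact Finset.sum_congr rfl fun t _ => by ring
      rw [Finset.sum_congr rfl h1, Finset.sum_comm]
      have h2 : ∀ t ∈ Finset.univ (α := Finset (Fin N)),
          ∑ s : Finset (Fin N), E i t * (p s * H s t)
            = E i t * ∑ s : Finset (Fin N), p s * H s t :=
        fun t _ => (Finset.mul_sum _ _ _).symm
      rw [Finset.sum_congr rfl h2]
      rw [Finset.sum_congr rfl
        (fun t (_ : t ∈ Finset.univ) => by rw [hH0 t, mul_zero])]
      exact Finset.sum_const_zero
    have hCin : ∀ i : Fin N,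
        ∑ s : Finset (Fin N), (if i ∈ s then p s * C s i else 0)
          = K * r i ^ 2 * (1 - π i) := by
      intro i
      have h1 : ∀ s ∈ Finset.univ (α := Finset (Fin N)),
          (if i ∈ s then p s * C s i else 0)
            = p s * C s i + (if i ∈ s then 0 else p s) * (K * r i ^ 2) := by
        intro s _
        by_cases h : i ∈ s
        · rw [if_pos h, if_pos h]; ring
        · rw [if_neg h, if_neg h, hCnot s i h]; ring
      rw [Finset.sum_congr rfl h1, Finset.sum_add_distrib, hC0 i, ← Finset.sum_mul,
        hcompl i]
      ring
    have hDi : ∀ i : Fin N,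
        ∑ s : Finset (Fin N), p s * (u s i * C s i)
          = K * r i ^ 2 * ((1 - π i) / π i) := by
      intro i
      have h1 : ∀ s ∈ Finset.univ (α := Finset (Fin N)),
          p s * (u s i * C s i)
            = (if i ∈ s then p s * C s i else 0) * (1 / π i) - p s * C s i := by
        intro s _
        simp only [hu]
        by_cases h : i ∈ s
        · rw [if_pos h, if_pos h]; ring
        · rw [if_neg h, if_neg h]; ring
      rw [Finset.sum_congr rfl h1, Finset.sum_sub_distrib, ← Finset.sum_mul, hCin i,
        hC0 i, mul_one_div, sub_zero, mul_div_assoc]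
    have husq : ∀ i : Fin N,
        ∑ s : Finset (Fin N), p s * (u s i) ^ 2 = (1 - π i) / π i := by
      intro i
      have h1 : ∀ s ∈ Finset.univ (α := Finset (Fin N)),
          p s * (u s i) ^ 2
            = (if i ∈ s then p s else 0) * (1 / π i - 1) ^ 2
              + (if i ∈ s then 0 else p s) := by
        intro s _
        simp only [hu]
        by_cases h : i ∈ s
        · rw [if_pos h, if_pos h, if_pos h]; ring
        · rw [if_neg h, if_neg h, if_neg h]; ring
      rw [Finset.sum_congr rfl h1, Finset.sum_add_distrib, ← Finset.sum_mul, ← hπ i,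
        hcompl i]
      have hne := hπne i
      field_simp
      ring
    have hkey : ∀ s : Finset (Fin N),
        2 * (∑ i, u s i * C s i) - ∑ i, (u s i) ^ 2 * (K * r i ^ 2)
          ≤ ∑ t : Finset (Fin N), H s t ^ 2 := by
      intro s
      have h0 : (0:ℝ) ≤ ∑ t : Finset (Fin N),
          (H s t - ∑ i, u s i * E i t) ^ 2 :=
        Finset.sum_nonneg fun t _ => sq_nonneg _
      have hexp : ∑ t : Finset (Fin N), (H s t - ∑ i, u s i * E i t) ^ 2
          = ∑ t : Finset (Fin N), H s t ^ 2
            - 2 * ∑ t : Finset (Fin N), H s t * (∑ i, u s i * E i t)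
            + ∑ t : Finset (Fin N), (∑ i, u s i * E i t) ^ 2 := by
        have h1 : ∀ t ∈ Finset.univ (α := Finset (Fin N)),
            (H s t - ∑ i, u s i * E i t) ^ 2
              = H s t ^ 2 - 2 * (H s t * ∑ i, u s i * E i t)
                + (∑ i, u s i * E i t) ^ 2 := fun t _ => by ring
        rw [Finset.sum_congr rfl h1, Finset.sum_add_distrib, Finset.sum_sub_distrib,
          ← Finset.mul_sum]
      have hHL : ∑ t : Finset (Fin N), H s t * (∑ i, u s i * E i t)
          = ∑ i, u s i * C s i := by
        have h1 : ∀ t ∈ Finset.univ (α := Finset (Fin N)),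
            H s t * (∑ i, u s i * E i t) = ∑ i, u s i * (E i t * H s t) := by
          intro t _
          rw [Finset.mul_sum]
          exact Finset.sum_congr rfl fun i _ => by ring
        rw [Finset.sum_congr rfl h1, Finset.sum_comm]
        refine Finset.sum_congr rfl fun i _ => ?_
        rw [← Finset.mul_sum]
      have hLL : ∑ t : Finset (Fin N), (∑ i, u s i * E i t) ^ 2
          = ∑ i, (u s i) ^ 2 * (K * r i ^ 2) := by
        have h1 := sq_expand (fun _ : Finset (Fin N) => (1:ℝ))
          (fun i t => u s i * E i t)
        simp only [one_mul] at h1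
        rw [h1]
        have h2 : ∀ i j : Fin N,
            ∑ t : Finset (Fin N), (u s i * E i t) * (u s j * E j t)
              = if i = j then u s i * u s j * (K * r i ^ 2) else 0 := by
          intro i j
          have h3 : ∑ t : Finset (Fin N), (u s i * E i t) * (u s j * E j t)
              = u s i * u s j * ∑ t : Finset (Fin N), E i t * E j t := by
            rw [Finset.mul_sum]
            exact Finset.sum_congr rfl fun t _ => by ring
          rw [h3, hortho i j]
          split <;> simp
        rw [Finset.sum_congr rfl (fun i (_ : i ∈ Finset.univ) =>
          Finset.sum_congr rfl (fun j (_ : j ∈ Finset.univ) => h2 i j))]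
        refine Finset.sum_congr rfl fun i _ => ?_
        rw [Finset.sum_ite_eq, if_pos (Finset.mem_univ i)]
        ring
      rw [hexp, hHL, hLL] at h0
      linarith
    set V : ℝ := ∑ i, r i ^ 2 * ((1 - π i) / π i) with hV
    have hpA : ∑ s : Finset (Fin N), p s * (∑ i, u s i * C s i) = K * V := by
      have h1 : ∀ s ∈ Finset.univ (α := Finset (Fin N)),
          p s * (∑ i, u s i * C s i) = ∑ i, p s * (u s i * C s i) :=
        fun s _ => Finset.mul_sum _ _ _
      rw [Finset.sum_congr rfl h1, Finset.sum_comm,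
        Finset.sum_congr rfl (fun i (_ : i ∈ Finset.univ) => hDi i), hV,
        Finset.mul_sum]
      exact Finset.sum_congr rfl fun i _ => by ring
    have hpB : ∑ s : Finset (Fin N), p s * (∑ i, (u s i) ^ 2 * (K * r i ^ 2)) = K * V := by
      have h1 : ∀ s ∈ Finset.univ (α := Finset (Fin N)),
          p s * (∑ i, (u s i) ^ 2 * (K * r i ^ 2))
            = ∑ i, (K * r i ^ 2) * (p s * (u s i) ^ 2) := by
        intro s _
        rw [Finset.mul_sum]
        exact Finset.sum_congr rfl fun i _ => by ring
      rw [Finset.sum_congr rfl h1, Finset.sum_comm]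
      have h2 : ∀ i ∈ Finset.univ (α := Fin N),
          ∑ s : Finset (Fin N), (K * r i ^ 2) * (p s * (u s i) ^ 2)
            = (K * r i ^ 2) * ((1 - π i) / π i) := by
        intro i _
        rw [← Finset.mul_sum, husq i]
      rw [Finset.sum_congr rfl h2, hV, Finset.mul_sum]
      exact Finset.sum_congr rfl fun i _ => by ring
    have hRHS : ∑ s : Finset (Fin N), p s * ∑ t : Finset (Fin N), H s t ^ 2 ≤ K * M := by
      have h1 : ∀ s ∈ Finset.univ (α := Finset (Fin N)),
          p s * ∑ t : Finset (Fin N), H s t ^ 2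
            = ∑ t : Finset (Fin N), p s * H s t ^ 2 := fun s _ => Finset.mul_sum _ _ _
      rw [Finset.sum_congr rfl h1, Finset.sum_comm]
      have h2 : ∀ t ∈ Finset.univ (α := Finset (Fin N)),
          ∑ s : Finset (Fin N), p s * H s t ^ 2 ≤ M := by
        intro t _
        have h3 := hM (Y t) (hYmem t)
        simp only [hH]
        exact h3
      calc ∑ t : Finset (Fin N), ∑ s : Finset (Fin N), p s * H s t ^ 2
          ≤ ∑ _t : Finset (Fin N), M := Finset.sum_le_sum h2
        _ = K * M := by
            rw [Finset.sum_const, Finset.card_univ, nsmul_eq_mul, hK]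
    have h1 := Finset.sum_le_sum
      (fun s (_ : s ∈ Finset.univ (α := Finset (Fin N))) =>
        mul_le_mul_of_nonneg_left (hkey s) (hp0 s))
    have h2 : ∑ s : Finset (Fin N),
        p s * (2 * (∑ i, u s i * C s i) - ∑ i, (u s i) ^ 2 * (K * r i ^ 2))
        = K * V := by
      have h3 : ∀ s ∈ Finset.univ (α := Finset (Fin N)),
          p s * (2 * (∑ i, u s i * C s i) - ∑ i, (u s i) ^ 2 * (K * r i ^ 2))
            = 2 * (p s * (∑ i, u s i * C s i))
              - p s * (∑ i, (u s i) ^ 2 * (K * r i ^ 2)) := fun s _ => by ring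
      rw [Finset.sum_congr rfl h3, Finset.sum_sub_distrib, ← Finset.mul_sum, hpA, hpB]
      ring
    rw [h2] at h1
    have hfinal : K * V ≤ K * M := le_trans h1 hRHS
    exact le_of_mul_le_mul_left hfinal hKpos
  · constructor
    · rintro z ⟨y, hy, rfl⟩
      simp only
      rw [hrisk y]
      refine Finset.sum_le_sum fun i _ => ?_
      have hq : 0 ≤ (1 - π i) / π i := div_nonneg (by linarith [hπle i]) (hπpos i).le
      refine mul_le_mul_of_nonneg_right ?_ hq
      have h1 := (hy i).1
      have h2 := (hy i).2
      have hmi := hm i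
      have hri := hr i
      apply sq_le_sq' <;> linarith
    · intro w hw
      refine hw ⟨b, fun i => ⟨hab i, le_rfl⟩, ?_⟩
      simp only
      rw [hrisk b]
      exact Finset.sum_congr rfl fun i _ => by rw [hm i, hr i]; ring
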